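/- Initial functors and discrete opfibrations form an orthogonal factorization system on Cat: every functor factors as an initial functor followed by a discrete opfibration, uniquely up to unique isomorphism, and initial functors are left orthogonal to discrete opfibrations. -/

import Mathlib

open CategoryTheory

universe u

/-- `p = (e', fb)` is a lift of `f : π.obj e ⟶ y` with domain `e`. -/
def Lifts {E X : Type*} [Category E] [Category X]
    (π : E ⥤ X) (e : E) {y : X} (f : π.obj e ⟶ y) (p : Σ e' : E, e ⟶ e') : Prop :=
  ∃ h : π.obj p.1 = y, π.map p.2 ≫ eqToHom h = f

/-- A functor is a discrete opfibration if every morphism out of the image of an object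
has a unique lift with prescribed domain. -/
def IsDiscreteOpfibration {E X : Type*} [Category E] [Category X] (π : E ⥤ X) : Prop :=
  ∀ (e : E) (y : X) (f : π.obj e ⟶ y), ∃! p : Σ e' : E, e ⟶ e', Lifts π e f p

namespace Comprehensive


section DOF

variable {E X : Type*} [Category E] [Category X] {π : E ⥤ X}

noncomputable def dlift (hπ : IsDiscreteOpfibration π) (e : E) {y : X} (f : π.obj e ⟶ y) :
    Σ e', e ⟶ e' := (hπ e y f).exists.choose

lemma dlift_lifts (hπ : IsDiscreteOpfibration π) (e : E) {y : X} (f : π.obj e ⟶ y) :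
    Lifts π e f (dlift hπ e f) := (hπ e y f).exists.choose_spec

lemma dlift_obj (hπ : IsDiscreteOpfibration π) (e : E) {y : X} (f : π.obj e ⟶ y) :
    π.obj (dlift hπ e f).1 = y := (dlift_lifts hπ e f).choose

lemma dlift_fac (hπ : IsDiscreteOpfibration π) (e : E) {y : X} (f : π.obj e ⟶ y) :
    π.map (dlift hπ e f).2 ≫ eqToHom (dlift_obj hπ e f) = f :=
  (dlift_lifts hπ e f).choose_spec

lemma dlift_map_eq (hπ : IsDiscreteOpfibration π) (e : E) {y : X} (f : π.obj e ⟶ y) :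
    π.map (dlift hπ e f).2 = f ≫ eqToHom (dlift_obj hπ e f).symm :=
  (comp_eqToHom_iff _ _ _).mp (dlift_fac hπ e f)

lemma lifts_compare (hπ : IsDiscreteOpfibration π) {e : E} {y : X} {f : π.obj e ⟶ y}
    {x x' : E} {g : e ⟶ x} {g' : e ⟶ x'}
    (h : Lifts π e f ⟨x, g⟩) (h' : Lifts π e f ⟨x', g'⟩) :
    ∃ w : x = x', g ≫ eqToHom w = g' := by
  obtain ⟨q, -, hq⟩ := hπ e y f
  have h1 : (⟨x, g⟩ : Σ e', e ⟶ e') = ⟨x', g'⟩ := (hq _ h).trans (hq _ h').symm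
  obtain ⟨w, hw⟩ := Sigma.mk.inj_iff.mp h1
  subst w
  exact ⟨rfl, by simpa using eq_of_heq hw⟩

lemma dlift_compare (hπ : IsDiscreteOpfibration π) {e : E} {y : X} {f : π.obj e ⟶ y}
    {x : E} {g : e ⟶ x} (h : Lifts π e f ⟨x, g⟩) :
    ∃ w : (dlift hπ e f).1 = x, (dlift hπ e f).2 ≫ eqToHom w = g :=
  lifts_compare hπ (by simpa using dlift_lifts hπ e f) h

end DOF

section Fact

variable {A B : Type u} [Category.{u} A] [Category.{u} B] (F : A ⥤ B)

/-- Pushforward of costructured arrows along a morphism of targets. -/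
@[simps]
def push {b b' : B} (g : b ⟶ b') : CostructuredArrow F b ⥤ CostructuredArrow F b' where
  obj o := CostructuredArrow.mk (o.hom ≫ g)
  map {o o'} h := CostructuredArrow.homMk h.left
    (by rw [CostructuredArrow.mk_hom_eq_self, CostructuredArrow.mk_hom_eq_self,
      ← Category.assoc, CostructuredArrow.w h])

lemma mk_comp_id (b : B) (o : CostructuredArrow F b) :
    CostructuredArrow.mk (o.hom ≫ 𝟙 b) = o := by
  have h : o.hom ≫ 𝟙 b = o.hom := by simp
  rw [h]; exact (CostructuredArrow.eq_mk o).symm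

/-- The functor `b ↦ π₀(F/b)`. -/
def comps : B ⥤ Type u where
  obj b := ConnectedComponents (CostructuredArrow F b)
  map g := TypeCat.ofHom (push F g).mapConnectedComponents
  map_id b := by
    ext x
    induction x using Quotient.inductionOn with
    | h o =>
      show Quotient.mk _ (CostructuredArrow.mk (o.hom ≫ 𝟙 b)) = Quotient.mk _ o
      exact congrArg _ (mk_comp_id F b o)
  map_comp {b b' b''} g g' := by
    ext x
    induction x using Quotient.inductionOn with
    | h o =>
      show Quotient.mk _ (CostructuredArrow.mk (o.hom ≫ (g ≫ g'))) =
        Quotient.mk _ (CostructuredArrow.mk ((o.hom ≫ g) ≫ g'))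
      rw [Category.assoc]

lemma comps_map_mk {b b' : B} (g : b ⟶ b') (o : CostructuredArrow F b) :
    (comps F).map g (Quotient.mk _ o) = Quotient.mk _ (CostructuredArrow.mk (o.hom ≫ g)) := rfl

/-- The projection, a discrete opfibration. -/
def proj : (comps F).Elements ⥤ B := CategoryOfElements.π (comps F)

/-- The initial part of the factorization. -/
def toMid : A ⥤ (comps F).Elements where
  obj a := (comps F).elementsMk (F.obj a) (Quotient.mk _ (CostructuredArrow.mk (𝟙 (F.obj a))))
  map {a a'} h := ⟨F.map h, by
    rw [comps_map_mk]
    exact Quotient.sound (Zigzag.of_hom (CostructuredArrow.homMk h (by simp)))⟩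
  map_id a := by apply Subtype.ext; simp
  map_comp h h' := by apply Subtype.ext; simp

lemma toMid_comp_proj : toMid F ⋙ proj F = F :=
  CategoryTheory.Functor.ext (fun _ => rfl) (fun _ _ _ => by simp [proj, toMid, CategoryOfElements.π]; exact (Category.id_comp _).symm)

lemma proj_dof : IsDiscreteOpfibration (proj F) := by
  intro e y f
  refine ⟨⟨⟨y, (comps F).map f e.2⟩, ⟨f, rfl⟩⟩, ⟨rfl, by simp [proj, CategoryOfElements.π]; exact Category.comp_id _⟩, ?_⟩
  rintro ⟨⟨b', x'⟩, g, hg⟩ ⟨h, hfac⟩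
  dsimp only at g hg h hfac
  obtain rfl : y = b' := h.symm
  obtain rfl : g = f := by simp [proj, CategoryOfElements.π] at hfac; exact (Category.comp_id g).symm.trans hfac
  obtain rfl : (comps F).map g e.2 = x' := hg
  rfl

/-- Lift an object of `F/b` in component `x` to an object of `toMid F/(b,x)`. -/
def liftObj (b : B) (x : (comps F).obj b) (o : CostructuredArrow F b)
    (ho : Quotient.mk _ o = x) :
    CostructuredArrow (toMid F) ((comps F).elementsMk b x) :=
  CostructuredArrow.mk (Y := o.left) ⟨o.hom, by
    show (comps F).map o.hom
      (Quotient.mk _ (CostructuredArrow.mk (𝟙 (F.obj o.left)))) = x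
    rw [comps_map_mk]
    have h2 : (CostructuredArrow.mk (𝟙 (F.obj o.left))).hom ≫ o.hom = o.hom := by simp
    rw [h2]
    rw [← CostructuredArrow.eq_mk o]
    exact ho⟩

def liftHom (b : B) (x : (comps F).obj b) {o o' : CostructuredArrow F b} (m : o ⟶ o')
    (ho : Quotient.mk _ o = x) (ho' : Quotient.mk _ o' = x) :
    liftObj F b x o ho ⟶ liftObj F b x o' ho' :=
  CostructuredArrow.homMk m.left (by
    apply CategoryOfElements.ext
    simp [toMid, liftObj])

lemma zigzag_lift (b : B) (x : (comps F).obj b) {o o' : CostructuredArrow F b}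
    (h : Zigzag o o') :
    ∀ (w : Quotient.mk _ o = x) (w' : Quotient.mk _ o' = x),
      Zigzag (liftObj F b x o w) (liftObj F b x o' w') := by
  induction h with
  | refl => intro w w'; exact Zigzag.refl _
  | @tail m o' h1 h2 ih =>
    intro w w'
    have wm : Quotient.mk (Zigzag.setoid _) m = x :=
      (Quotient.sound (s := Zigzag.setoid _) h1).symm.trans w
    refine Relation.ReflTransGen.tail (ih w wm) ?_
    rcases h2 with ⟨⟨f⟩⟩ | ⟨⟨f⟩⟩
    · exact Or.inl ⟨liftHom F b x f wm w'⟩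
    · exact Or.inr ⟨liftHom F b x f w' wm⟩

lemma obj_eq_liftObj (b : B) (x : (comps F).obj b)
    (P : CostructuredArrow (toMid F) ((comps F).elementsMk b x)) :
    ∃ (o : CostructuredArrow F b) (ho : Quotient.mk _ o = x),
      P = liftObj F b x o ho := by
  have h1 : (comps F).map P.hom.val
      (Quotient.mk _ (CostructuredArrow.mk (𝟙 (F.obj P.left)))) = x := P.hom.2
  rw [comps_map_mk] at h1
  have h2 : (CostructuredArrow.mk (𝟙 (F.obj P.left))).hom ≫ P.hom.val = P.hom.val := Category.id_comp _
  replace h1 := (congrArg (fun t => (Quotient.mk _ (CostructuredArrow.mk t) : (comps F).obj b)) h2).symm.trans h1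
  refine ⟨CostructuredArrow.mk P.hom.val, h1, ?_⟩
  exact CostructuredArrow.eq_mk P

lemma toMid_initial : (toMid F).Initial := by
  constructor
  rintro ⟨b, x⟩
  obtain ⟨o₀, ho₀⟩ := Quotient.exists_rep x
  have : Nonempty (CostructuredArrow (toMid F) ((comps F).elementsMk b x)) :=
    ⟨liftObj F b x o₀ ho₀⟩
  show IsConnected (CostructuredArrow (toMid F) ((comps F).elementsMk b x))
  apply zigzag_isConnected
  intro P Q
  obtain ⟨o, ho, rfl⟩ := obj_eq_liftObj F b x P
  obtain ⟨o', ho', rfl⟩ := obj_eq_liftObj F b x Q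
  exact zigzag_lift F b x (Quotient.exact (ho.trans ho'.symm)) ho ho'

end Fact
section Orth

variable {A C E B : Type*} [Category A] [Category C] [Category E] [Category B]

lemma wobj (i : A ⥤ C) (p : E ⥤ B) (u : A ⥤ E) (v : C ⥤ B) (hsq : i ⋙ v = u ⋙ p) (a : A) :
    p.obj (u.obj a) = v.obj (i.obj a) := (Functor.congr_obj hsq a).symm

lemma pmap_umap (i : A ⥤ C) (p : E ⥤ B) (u : A ⥤ E) (v : C ⥤ B) (hsq : i ⋙ v = u ⋙ p)
    {a a' : A} (h : a ⟶ a') :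
    p.map (u.map h) =
      eqToHom (wobj i p u v hsq a) ≫ v.map (i.map h) ≫ eqToHom (wobj i p u v hsq a').symm := by
  have := Functor.congr_hom hsq.symm h
  simpa using this

/-- The comparison arrow to lift. -/
def arr (i : A ⥤ C) (p : E ⥤ B) (u : A ⥤ E) (v : C ⥤ B) (hsq : i ⋙ v = u ⋙ p)
    {c : C} (o : CostructuredArrow i c) : p.obj (u.obj o.left) ⟶ v.obj c :=
  eqToHom (wobj i p u v hsq o.left) ≫ v.map o.hom

/-- The chosen lift of `arr` at an object of `i/c`. -/
noncomputable def K (i : A ⥤ C) (p : E ⥤ B) (u : A ⥤ E) (v : C ⥤ B)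
    (hp : IsDiscreteOpfibration p) (hsq : i ⋙ v = u ⋙ p)
    {c : C} (o : CostructuredArrow i c) : Σ e', u.obj o.left ⟶ e' :=
  dlift hp (u.obj o.left) (arr i p u v hsq o)

variable (i : A ⥤ C) (p : E ⥤ B) (u : A ⥤ E) (v : C ⥤ B)

section K
variable (hp : IsDiscreteOpfibration p) (hsq : i ⋙ v = u ⋙ p)

lemma K_obj {c : C} (o : CostructuredArrow i c) :
    p.obj (K i p u v hp hsq o).1 = v.obj c := dlift_obj hp _ _

lemma K_fac {c : C} (o : CostructuredArrow i c) :
    p.map (K i p u v hp hsq o).2 ≫ eqToHom (K_obj i p u v hp hsq o) =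
      arr i p u v hsq o := dlift_fac hp _ _

lemma K_map_eq {c : C} (o : CostructuredArrow i c) :
    p.map (K i p u v hp hsq o).2 =
      arr i p u v hsq o ≫ eqToHom (K_obj i p u v hp hsq o).symm :=
  dlift_map_eq hp _ _

lemma K_compare {c : C} (o : CostructuredArrow i c) {x : E} {g : u.obj o.left ⟶ x}
    (hl : Lifts p (u.obj o.left) (arr i p u v hsq o) ⟨x, g⟩) :
    ∃ w : (K i p u v hp hsq o).1 = x, (K i p u v hp hsq o).2 ≫ eqToHom w = g :=
  dlift_compare hp hl

lemma K_fst_eq {c : C} {o o' : CostructuredArrow i c} (m : o ⟶ o') :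
    (K i p u v hp hsq o).1 = (K i p u v hp hsq o').1 := by
  have hl : Lifts p (u.obj o.left) (arr i p u v hsq o)
      ⟨(K i p u v hp hsq o').1, u.map m.left ≫ (K i p u v hp hsq o').2⟩ := by
    refine ⟨K_obj i p u v hp hsq o', ?_⟩
    show p.map (u.map m.left ≫ (K i p u v hp hsq o').2) ≫ _ = _
    rw [Functor.map_comp, Category.assoc, K_fac i p u v hp hsq o', arr, arr,
      pmap_umap i p u v hsq m.left]
    simp only [Category.assoc, eqToHom_trans_assoc, eqToHom_refl, Category.id_comp,
      ← Functor.map_comp]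
    rw [CostructuredArrow.w m]
  obtain ⟨w, -⟩ := K_compare i p u v hp hsq o hl
  exact w

end K

/-- Object part of the diagonal filler. -/
noncomputable def dobj (i : A ⥤ C) (p : E ⥤ B) (u : A ⥤ E) (v : C ⥤ B) [i.Initial]
    (hp : IsDiscreteOpfibration p) (hsq : i ⋙ v = u ⋙ p) (c : C) : E :=
  (K i p u v hp hsq (Classical.arbitrary (CostructuredArrow i c))).1

variable [i.Initial] (hp : IsDiscreteOpfibration p) (hsq : i ⋙ v = u ⋙ p)

lemma dobj_eq {c : C} (o : CostructuredArrow i c) :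
    dobj i p u v hp hsq c = (K i p u v hp hsq o).1 :=
  constant_of_preserves_morphisms (fun o => (K i p u v hp hsq o).1)
    (fun _ _ m => K_fst_eq i p u v hp hsq m) _ o

lemma dobj_p (c : C) : p.obj (dobj i p u v hp hsq c) = v.obj c :=
  dlift_obj hp _ _

/-- Morphism-part lift. -/
noncomputable def M {c c' : C} (h : c ⟶ c') : Σ e', dobj i p u v hp hsq c ⟶ e' :=
  dlift hp (dobj i p u v hp hsq c) (eqToHom (dobj_p i p u v hp hsq c) ≫ v.map h)

lemma M_obj {c c' : C} (h : c ⟶ c') :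
    p.obj (M i p u v hp hsq h).1 = v.obj c' := dlift_obj hp _ _

lemma M_fac {c c' : C} (h : c ⟶ c') :
    p.map (M i p u v hp hsq h).2 ≫ eqToHom (M_obj i p u v hp hsq h) =
      eqToHom (dobj_p i p u v hp hsq c) ≫ v.map h := dlift_fac hp _ _

lemma M_map_eq {c c' : C} (h : c ⟶ c') :
    p.map (M i p u v hp hsq h).2 =
      (eqToHom (dobj_p i p u v hp hsq c) ≫ v.map h) ≫
        eqToHom (M_obj i p u v hp hsq h).symm :=
  dlift_map_eq hp _ _

lemma M_compare {c c' : C} (h : c ⟶ c') {x : E} {g : dobj i p u v hp hsq c ⟶ x}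
    (hl : Lifts p (dobj i p u v hp hsq c)
      (eqToHom (dobj_p i p u v hp hsq c) ≫ v.map h) ⟨x, g⟩) :
    ∃ w : (M i p u v hp hsq h).1 = x, (M i p u v hp hsq h).2 ≫ eqToHom w = g :=
  dlift_compare hp hl

lemma M_fst {c c' : C} (h : c ⟶ c') :
    (M i p u v hp hsq h).1 = dobj i p u v hp hsq c' := by
  set o := Classical.arbitrary (CostructuredArrow i c) with ho
  have h1 : dobj i p u v hp hsq c = (K i p u v hp hsq o).1 := dobj_eq i p u v hp hsq o
  have h2 : dobj i p u v hp hsq c' =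
      (K i p u v hp hsq (CostructuredArrow.mk (o.hom ≫ h))).1 :=
    dobj_eq i p u v hp hsq _
  rw [h2]
  have hl : Lifts p (u.obj (CostructuredArrow.mk (o.hom ≫ h)).left)
      (arr i p u v hsq (CostructuredArrow.mk (o.hom ≫ h)))
      ⟨(M i p u v hp hsq h).1,
        (K i p u v hp hsq o).2 ≫ eqToHom h1.symm ≫ (M i p u v hp hsq h).2⟩ := by
    refine ⟨M_obj i p u v hp hsq h, ?_⟩
    show p.map ((K i p u v hp hsq o).2 ≫ eqToHom h1.symm ≫ (M i p u v hp hsq h).2) ≫ _ = _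
    simp only [Functor.map_comp, Category.assoc, eqToHom_map]
    rw [M_fac i p u v hp hsq h, K_map_eq i p u v hp hsq o]
    simp only [arr, Category.assoc, eqToHom_trans_assoc, eqToHom_refl, Category.id_comp,
      CostructuredArrow.mk_hom_eq_self, ← Functor.map_comp]
  obtain ⟨w, -⟩ := K_compare i p u v hp hsq (CostructuredArrow.mk (o.hom ≫ h)) hl
  exact w.symm

/-- The diagonal filler functor. -/
noncomputable def dfun : C ⥤ E where
  obj c := dobj i p u v hp hsq c
  map {c c'} h := (M i p u v hp hsq h).2 ≫ eqToHom (M_fst i p u v hp hsq h)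
  map_id c := by
    have hl : Lifts p (dobj i p u v hp hsq c)
        (eqToHom (dobj_p i p u v hp hsq c) ≫ v.map (𝟙 c))
        ⟨dobj i p u v hp hsq c, 𝟙 _⟩ := ⟨dobj_p i p u v hp hsq c, by simp⟩
    obtain ⟨w, hw⟩ := M_compare i p u v hp hsq (𝟙 c) hl
    exact hw
  map_comp {c c' c''} h h' := by
    have hl : Lifts p (dobj i p u v hp hsq c)
        (eqToHom (dobj_p i p u v hp hsq c) ≫ v.map (h ≫ h'))
        ⟨(M i p u v hp hsq h').1,
          (M i p u v hp hsq h).2 ≫ eqToHom (M_fst i p u v hp hsq h) ≫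
            (M i p u v hp hsq h').2⟩ := by
      refine ⟨M_obj i p u v hp hsq h', ?_⟩
      show p.map ((M i p u v hp hsq h).2 ≫ eqToHom (M_fst i p u v hp hsq h) ≫
        (M i p u v hp hsq h').2) ≫ _ = _
      simp only [Functor.map_comp, Category.assoc, eqToHom_map]
      rw [M_fac i p u v hp hsq h', M_map_eq i p u v hp hsq h]
      simp [eqToHom_trans_assoc]
    obtain ⟨w, hw⟩ := M_compare i p u v hp hsq (h ≫ h') hl
    have hL := (comp_eqToHom_iff w _ _).mp hw
    show (M i p u v hp hsq (h ≫ h')).2 ≫ eqToHom (M_fst i p u v hp hsq (h ≫ h')) = _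
    rw [hL]
    simp

lemma dobj_ia (a : A) : dobj i p u v hp hsq (i.obj a) = u.obj a := by
  have hl : Lifts p (u.obj (CostructuredArrow.mk (𝟙 (i.obj a))).left)
      (arr i p u v hsq (CostructuredArrow.mk (𝟙 (i.obj a))))
      ⟨u.obj a, 𝟙 _⟩ := by
    refine ⟨wobj i p u v hsq a, ?_⟩
    show p.map (𝟙 _) ≫ _ = _
    simp [arr]
  obtain ⟨w, -⟩ := K_compare i p u v hp hsq (CostructuredArrow.mk (𝟙 (i.obj a))) hl
  rw [dobj_eq i p u v hp hsq (CostructuredArrow.mk (𝟙 (i.obj a))), w]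

lemma dfun_comp_i : i ⋙ dfun i p u v hp hsq = u := by
  refine CategoryTheory.Functor.ext (dobj_ia i p u v hp hsq) ?_
  intro a a' h
  have hl : Lifts p (dobj i p u v hp hsq (i.obj a))
      (eqToHom (dobj_p i p u v hp hsq (i.obj a)) ≫ v.map (i.map h))
      ⟨u.obj a', eqToHom (dobj_ia i p u v hp hsq a) ≫ u.map h⟩ := by
    refine ⟨wobj i p u v hsq a', ?_⟩
    show p.map (eqToHom (dobj_ia i p u v hp hsq a) ≫ u.map h) ≫ _ = _
    rw [Functor.map_comp, eqToHom_map, pmap_umap i p u v hsq h]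
    simp
  obtain ⟨w, hw⟩ := M_compare i p u v hp hsq (i.map h) hl
  have hL := (comp_eqToHom_iff w _ _).mp hw
  show (M i p u v hp hsq (i.map h)).2 ≫ eqToHom (M_fst i p u v hp hsq (i.map h)) = _
  rw [hL]
  simp
  rfl

lemma dfun_comp_p : dfun i p u v hp hsq ⋙ p = v := by
  refine CategoryTheory.Functor.ext (dobj_p i p u v hp hsq) ?_
  intro c c' h
  show p.map ((M i p u v hp hsq h).2 ≫ eqToHom (M_fst i p u v hp hsq h)) = _
  rw [Functor.map_comp, eqToHom_map, M_map_eq i p u v hp hsq h]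
  simp
  rfl

lemma dfun_unique (d : C ⥤ E) (h1 : i ⋙ d = u) (h2 : d ⋙ p = v) :
    d = dfun i p u v hp hsq := by
  have hobj : ∀ c, d.obj c = dobj i p u v hp hsq c := by
    intro c
    set o := Classical.arbitrary (CostructuredArrow i c) with ho
    have ho1 : d.obj (i.obj o.left) = u.obj o.left := Functor.congr_obj h1 o.left
    have hl : Lifts p (u.obj o.left) (arr i p u v hsq o)
        ⟨d.obj c, eqToHom ho1.symm ≫ d.map o.hom⟩ := by
      refine ⟨Functor.congr_obj h2 c, ?_⟩
      show p.map (eqToHom ho1.symm ≫ d.map o.hom) ≫ _ = _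
      have h3 : p.map (d.map o.hom) = eqToHom (Functor.congr_obj h2 (i.obj o.left)) ≫
          v.map o.hom ≫ eqToHom (Functor.congr_obj h2 c).symm := by
        simpa using Functor.congr_hom h2 o.hom
      rw [Functor.map_comp, eqToHom_map, h3]
      simp [arr]
    obtain ⟨w, -⟩ := K_compare i p u v hp hsq o hl
    rw [dobj_eq i p u v hp hsq o, w]
  refine CategoryTheory.Functor.ext hobj ?_
  intro c c' h
  have hl : Lifts p (dobj i p u v hp hsq c)
      (eqToHom (dobj_p i p u v hp hsq c) ≫ v.map h)
      ⟨d.obj c', eqToHom (hobj c).symm ≫ d.map h⟩ := by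
    refine ⟨Functor.congr_obj h2 c', ?_⟩
    show p.map (eqToHom (hobj c).symm ≫ d.map h) ≫ _ = _
    have h3 : p.map (d.map h) = eqToHom (Functor.congr_obj h2 c) ≫
        v.map h ≫ eqToHom (Functor.congr_obj h2 c').symm := by
      simpa using Functor.congr_hom h2 h
    rw [Functor.map_comp, eqToHom_map, h3]
    simp
  obtain ⟨w, hw⟩ := M_compare i p u v hp hsq h hl
  have hL := (comp_eqToHom_iff w _ _).mp hw
  show d.map h = eqToHom (hobj c) ≫
    ((M i p u v hp hsq h).2 ≫ eqToHom (M_fst i p u v hp hsq h)) ≫ eqToHom (hobj c').symm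
  rw [hL]
  simp

end Orth

end Comprehensive

open Comprehensive in
/-- The comprehensive factorization system: initial functors and discrete opfibrations
form an orthogonal factorization system on `Cat`.  Every functor factors as an initial
functor followed by a discrete opfibration, uniquely up to unique isomorphism, and
initial functors are left orthogonal to discrete opfibrations (unique diagonal fillers). -/
theorem comprehensive_factorization :
    -- factorization
    (∀ {A B : Cat.{u, u}} (F : A ⟶ B), ∃ (C : Cat.{u, u}) (i : A ⟶ C) (p : C ⟶ B),
      Functor.Initial i.toFunctor ∧ IsDiscreteOpfibration p.toFunctor ∧ i ≫ p = F) ∧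
    -- uniqueness of the factorization, up to unique isomorphism
    (∀ {A B : Cat.{u, u}} (F : A ⟶ B) (C C' : Cat.{u, u})
      (i : A ⟶ C) (p : C ⟶ B) (i' : A ⟶ C') (p' : C' ⟶ B),
      Functor.Initial i.toFunctor → IsDiscreteOpfibration p.toFunctor → i ≫ p = F →
      Functor.Initial i'.toFunctor → IsDiscreteOpfibration p'.toFunctor → i' ≫ p' = F →
      ∃! e : C ≅ C', i ≫ e.hom = i' ∧ e.hom ≫ p' = p) ∧
    -- orthogonality: unique diagonal fillers
    (∀ {A C E B : Cat.{u, u}} (i : A ⟶ C) (p : E ⟶ B) (u : A ⟶ E) (v : C ⟶ B),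
      Functor.Initial i.toFunctor → IsDiscreteOpfibration p.toFunctor → i ≫ v = u ≫ p →
      ∃! d : C ⟶ E, i ≫ d = u ∧ d ≫ p = v) := by
  have orth : ∀ {A C E B : Cat.{u, u}} (i : A ⟶ C) (p : E ⟶ B) (u : A ⟶ E) (v : C ⟶ B),
      Functor.Initial i.toFunctor → IsDiscreteOpfibration p.toFunctor → i ≫ v = u ≫ p →
      ∃! d : C ⟶ E, i ≫ d = u ∧ d ≫ p = v := by
    intro A C E B i p u v hi hp hsq
    haveI := hi
    have hsq' : i.toFunctor ⋙ v.toFunctor = u.toFunctor ⋙ p.toFunctor :=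
      congrArg Cat.Hom.toFunctor hsq
    refine ⟨(dfun i.toFunctor p.toFunctor u.toFunctor v.toFunctor hp hsq').toCatHom,
      ⟨Cat.ext (dfun_comp_i _ _ _ _ hp hsq'), Cat.ext (dfun_comp_p _ _ _ _ hp hsq')⟩, ?_⟩
    rintro d ⟨h1, h2⟩
    exact Cat.ext (dfun_unique _ _ _ _ hp hsq' d.toFunctor
      (congrArg Cat.Hom.toFunctor h1) (congrArg Cat.Hom.toFunctor h2))
  refine ⟨?_, ?_, @orth⟩
  · intro A B F
    exact ⟨Cat.of ((comps F.toFunctor).Elements), (toMid F.toFunctor).toCatHom,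
      (proj F.toFunctor).toCatHom, toMid_initial F.toFunctor, proj_dof F.toFunctor,
      Cat.ext (toMid_comp_proj F.toFunctor)⟩
  · intro A B F C C' i p i' p' hi hp hfac hi' hp' hfac'
    obtain ⟨d, ⟨hd1, hd2⟩, hdu⟩ := orth i p' i' p hi hp' (hfac.trans hfac'.symm)
    obtain ⟨d', ⟨hd1', hd2'⟩, hdu'⟩ := orth i' p i p' hi' hp (hfac'.trans hfac.symm)
    obtain ⟨e0, -, hu0⟩ := orth i p i p hi hp rfl
    obtain ⟨e1, -, hu1⟩ := orth i' p' i' p' hi' hp' rfl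
    have hdd' : d ≫ d' = 𝟙 C := by
      have ha : i ≫ d ≫ d' = i ∧ (d ≫ d') ≫ p = p := by
        constructor
        · rw [← Category.assoc, hd1, hd1']
        · rw [Category.assoc, hd2', hd2]
      have hb : i ≫ 𝟙 C = i ∧ 𝟙 C ≫ p = p := by simp
      exact (hu0 _ ha).trans (hu0 _ hb).symm
    have hd'd : d' ≫ d = 𝟙 C' := by
      have ha : i' ≫ d' ≫ d = i' ∧ (d' ≫ d) ≫ p' = p' := by
        constructor
        · rw [← Category.assoc, hd1', hd1]
        · rw [Category.assoc, hd2, hd2']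
      have hb : i' ≫ 𝟙 C' = i' ∧ 𝟙 C' ≫ p' = p' := by simp
      exact (hu1 _ ha).trans (hu1 _ hb).symm
    refine ⟨⟨d, d', hdd', hd'd⟩, ⟨hd1, hd2⟩, ?_⟩
    rintro e ⟨he1, he2⟩
    exact Iso.ext (hdu e.hom ⟨he1, he2⟩)
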